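/- arXiv:2002.06310 — 6 statements merged into one kernel-verified Lean document; each statement's English description precedes it below -/
import Mathlib

section
/- For every irrational x ∈ (0,1) and every integer n ≥ 0, the n-th principal convergent p_n/q_n of the odd-odd continued fraction of x is a best 1-rational approximation of x. -/
/-- The odd-odd continued fraction map on `[0,1]`.  For `x ∈ [(k-1)/k, k/(k+1))` with `k ≥ 1`
one has `k = ⌊1/(1-x)⌋`, and the two branches are separated by `(2k-1)/(2k+1)`. -/
noncomputable def oocfT (x : ℝ) : ℝ :=
  if x = 1 then 1
  else if x < (2 * (⌊1 / (1 - x)⌋ : ℝ) - 1) / (2 * (⌊1 / (1 - x)⌋ : ℝ) + 1) then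
    ((⌊1 / (1 - x)⌋ : ℝ) * x - ((⌊1 / (1 - x)⌋ : ℝ) - 1)) /
      ((⌊1 / (1 - x)⌋ : ℝ) - ((⌊1 / (1 - x)⌋ : ℝ) + 1) * x)
  else
    ((⌊1 / (1 - x)⌋ : ℝ) - ((⌊1 / (1 - x)⌋ : ℝ) + 1) * x) /
      ((⌊1 / (1 - x)⌋ : ℝ) * x - ((⌊1 / (1 - x)⌋ : ℝ) - 1))

/-- OOCF partial quotient `a` of a point `y`: `a = k+1` if `y` is in the lower branch
interval `((k-1)/k, (2k-1)/(2k+1))`, and `a = k` if `y ∈ ((2k-1)/(2k+1), k/(k+1))`,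
where `k = ⌊1/(1-y)⌋`. -/
noncomputable def oocfA (y : ℝ) : ℤ :=
  if y < (2 * (⌊1 / (1 - y)⌋ : ℝ) - 1) / (2 * (⌊1 / (1 - y)⌋ : ℝ) + 1) then ⌊1 / (1 - y)⌋ + 1
  else ⌊1 / (1 - y)⌋

/-- OOCF partial quotient `ε` of a point `y`: `ε = -1` on the lower branch interval and
`ε = 1` on the upper one. -/
noncomputable def oocfE (y : ℝ) : ℤ :=
  if y < (2 * (⌊1 / (1 - y)⌋ : ℝ) - 1) / (2 * (⌊1 / (1 - y)⌋ : ℝ) + 1) then -1 else 1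

/-- The OOCF convergents `(p'_n, q'_n, p_n, q_n)` of `x`, defined by
`p'_0 = 1, q'_0 = 0, p_0 = 1, q_0 = 1` and
`p'_n = a_n p_{n-1} - p'_{n-1}`, `q'_n = a_n q_{n-1} - q'_{n-1}`,
`p_n = 2 p'_n + ε_n p_{n-1}`, `q_n = 2 q'_n + ε_n q_{n-1}`,
where `(a_n, ε_n)` are the partial quotients of `x`, i.e. `a_n = oocfA (oocfT^[n-1] x)`,
`ε_n = oocfE (oocfT^[n-1] x)`. -/
noncomputable def oocfConv (x : ℝ) : ℕ → ℤ × ℤ × ℤ × ℤ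
  | 0 => (1, 0, 1, 1)
  | n + 1 =>
    let c := oocfConv x n
    (oocfA (oocfT^[n] x) * c.2.2.1 - c.1,
     oocfA (oocfT^[n] x) * c.2.2.2 - c.2.1,
     2 * (oocfA (oocfT^[n] x) * c.2.2.1 - c.1) + oocfE (oocfT^[n] x) * c.2.2.1,
     2 * (oocfA (oocfT^[n] x) * c.2.2.2 - c.2.1) + oocfE (oocfT^[n] x) * c.2.2.2)

/-- `n`-th sub-convergent numerator `p'_n`. -/
noncomputable def oocfP' (x : ℝ) (n : ℕ) : ℤ := (oocfConv x n).1

/-- `n`-th sub-convergent denominator `q'_n`. -/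
noncomputable def oocfQ' (x : ℝ) (n : ℕ) : ℤ := (oocfConv x n).2.1

/-- `n`-th principal convergent numerator `p_n`. -/
noncomputable def oocfP (x : ℝ) (n : ℕ) : ℤ := (oocfConv x n).2.2.1

/-- `n`-th principal convergent denominator `q_n`. -/
noncomputable def oocfQ (x : ℝ) (n : ℕ) : ℤ := (oocfConv x n).2.2.2

/-- `n`-th pseudo-convergent numerator: `p''_n = p'_n + ε_n p_{n-1}` for `n ≥ 1`
(with the convention `p''_0 = 0`). -/
noncomputable def oocfP'' (x : ℝ) : ℕ → ℤ
  | 0 => 0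
  | n + 1 => oocfP' x (n + 1) + oocfE (oocfT^[n] x) * oocfP x n

/-- `n`-th pseudo-convergent denominator: `q''_n = q'_n + ε_n q_{n-1}` for `n ≥ 1`
(with the convention `q''_0 = 1`). -/
noncomputable def oocfQ'' (x : ℝ) : ℕ → ℤ
  | 0 => 1
  | n + 1 => oocfQ' x (n + 1) + oocfE (oocfT^[n] x) * oocfQ x n

/-- `a/b` is a 1-rational: `b > 0`, `a`, `b` both odd and coprime. -/
def IsOneRat (a b : ℤ) : Prop := 0 < b ∧ Odd a ∧ Odd b ∧ IsCoprime a b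

/-- `p/q` is a best 1-rational approximation of `x`: it is a 1-rational and
`|qx - p| < |bx - a|` for every 1-rational `a/b ≠ p/q` with `0 < b ≤ q`. -/
def IsBestOneRatApprox (x : ℝ) (p q : ℤ) : Prop :=
  IsOneRat p q ∧
    ∀ a b : ℤ, IsOneRat a b → b ≤ q → (a : ℝ) / (b : ℝ) ≠ (p : ℝ) / (q : ℝ) →
      |(q : ℝ) * x - (p : ℝ)| < |(b : ℝ) * x - (a : ℝ)|

lemma oocf_step {y : ℝ} (hy : y ∈ Set.Ioo (0:ℝ) 1) (hirr : Irrational y) :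
    oocfT y ∈ Set.Ioo (0:ℝ) 1 ∧ Irrational (oocfT y) ∧ 1 ≤ oocfA y ∧
    (oocfE y = 1 ∨ (oocfE y = -1 ∧ 2 ≤ oocfA y)) ∧
    y * (((oocfA y : ℝ) + (oocfE y : ℝ)) + (oocfA y : ℝ) * oocfT y)
      = ((oocfA y : ℝ) - 1 + (oocfE y : ℝ)) + ((oocfA y : ℝ) - 1) * oocfT y := by
  obtain ⟨hy0, hy1⟩ := hy
  have h1y : (0:ℝ) < 1 - y := by linarith
  have hyne1 : y ≠ 1 := fun h => hirr ⟨1, by rw [h]; norm_num⟩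
  have hinv : 1 ≤ 1 / (1 - y) := by rw [le_div_iff₀ h1y]; linarith
  set k : ℤ := ⌊1 / (1 - y)⌋ with hkdef
  have hk1 : (1:ℤ) ≤ k := Int.le_floor.mpr (by exact_mod_cast hinv)
  have hk1R : (1:ℝ) ≤ (k:ℝ) := by exact_mod_cast hk1
  have hA : (k:ℝ) * (1 - y) ≤ 1 := (le_div_iff₀ h1y).mp (Int.floor_le _)
  have hB : 1 < ((k:ℝ) + 1) * (1 - y) := by
    have := Int.lt_floor_add_one (1 / (1 - y))
    rw [div_lt_iff₀ h1y] at this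
    push_cast at this
    linarith
  have hA' : (k:ℝ) * (1 - y) < 1 := by
    rcases lt_or_eq_of_le hA with h | h
    · exact h
    · exfalso
      apply hirr
      refine ⟨((k:ℚ) - 1) / (k:ℚ), ?_⟩
      have hkne : (k:ℝ) ≠ 0 := by linarith
      push_cast
      rw [div_eq_iff hkne]
      nlinarith
  have hc2 : (0:ℝ) < 2 * (k:ℝ) + 1 := by linarith
  have hcne : y ≠ (2 * (k:ℝ) - 1) / (2 * (k:ℝ) + 1) := by
    intro h
    apply hirr
    exact ⟨(2 * (k:ℚ) - 1) / (2 * (k:ℚ) + 1), by rw [h]; push_cast; ring⟩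
  rcases lt_or_gt_of_ne hcne with hlt | hgt
  · -- lower branch
    have hT : oocfT y = ((k:ℝ) * y - ((k:ℝ) - 1)) / ((k:ℝ) - ((k:ℝ) + 1) * y) := by
      rw [oocfT, if_neg hyne1, if_pos (by rw [← hkdef]; exact hlt), ← hkdef]
    have ha : oocfA y = k + 1 := by rw [oocfA, if_pos (by rw [← hkdef]; exact hlt)]
    have he : oocfE y = -1 := by rw [oocfE, if_pos (by rw [← hkdef]; exact hlt)]
    set z := oocfT y with hzdef
    have hden : (0:ℝ) < (k:ℝ) - ((k:ℝ) + 1) * y := by nlinarith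
    have hnum : (0:ℝ) < (k:ℝ) * y - ((k:ℝ) - 1) := by nlinarith
    have hz0 : 0 < z := by rw [hT]; exact div_pos hnum hden
    have hz1 : z < 1 := by
      rw [hT, div_lt_one hden]
      have := (lt_div_iff₀ hc2).mp hlt
      nlinarith
    have hz : z * ((k:ℝ) - ((k:ℝ) + 1) * y) = (k:ℝ) * y - ((k:ℝ) - 1) := by
      rw [hT]; exact div_mul_cancel₀ _ hden.ne'
    have hzirr : Irrational z := by
      by_contra hno
      rw [Irrational] at hno
      push_neg at hno
      obtain ⟨q, hq⟩ := hno
      apply hirr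
      refine ⟨(((k:ℚ) - 1) + (k:ℚ) * q) / ((k:ℚ) + ((k:ℚ) + 1) * q), ?_⟩
      have hqpos : (0:ℝ) < (q:ℝ) := by rw [hq]; exact hz0
      have hdn : ((k:ℝ) + ((k:ℝ) + 1) * (q:ℝ)) ≠ 0 := by nlinarith
      push_cast
      rw [div_eq_iff hdn]
      rw [hq]
      linear_combination hz
    refine ⟨⟨hz0, hz1⟩, hzirr, by omega, Or.inr ⟨he, by omega⟩, ?_⟩
    rw [ha, he]
    push_cast
    linear_combination -hz
  · -- upper branch
    have hnlt : ¬ y < (2 * (k:ℝ) - 1) / (2 * (k:ℝ) + 1) := not_lt.mpr (le_of_lt hgt)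
    have hT : oocfT y = ((k:ℝ) - ((k:ℝ) + 1) * y) / ((k:ℝ) * y - ((k:ℝ) - 1)) := by
      rw [oocfT, if_neg hyne1, if_neg (by rw [← hkdef]; exact hnlt), ← hkdef]
    have ha : oocfA y = k := by rw [oocfA, if_neg (by rw [← hkdef]; exact hnlt)]
    have he : oocfE y = 1 := by rw [oocfE, if_neg (by rw [← hkdef]; exact hnlt)]
    set z := oocfT y with hzdef
    have hden : (0:ℝ) < (k:ℝ) * y - ((k:ℝ) - 1) := by nlinarith
    have hnum : (0:ℝ) < (k:ℝ) - ((k:ℝ) + 1) * y := by nlinarith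
    have hz0 : 0 < z := by rw [hT]; exact div_pos hnum hden
    have hz1 : z < 1 := by
      rw [hT, div_lt_one hden]
      have := (div_lt_iff₀ hc2).mp hgt
      nlinarith
    have hz : z * ((k:ℝ) * y - ((k:ℝ) - 1)) = (k:ℝ) - ((k:ℝ) + 1) * y := by
      rw [hT]; field_simp
    have hzirr : Irrational z := by
      by_contra hno
      rw [Irrational] at hno
      push_neg at hno
      obtain ⟨q, hq⟩ := hno
      apply hirr
      refine ⟨((k:ℚ) + ((k:ℚ) - 1) * q) / (((k:ℚ) + 1) + (k:ℚ) * q), ?_⟩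
      have hqpos : (0:ℝ) < (q:ℝ) := by rw [hq]; exact hz0
      have hdn : (((k:ℝ) + 1) + (k:ℝ) * (q:ℝ)) ≠ 0 := by nlinarith
      push_cast
      rw [div_eq_iff hdn]
      rw [hq]
      linear_combination -hz
    refine ⟨⟨hz0, hz1⟩, hzirr, by omega, Or.inl he, ?_⟩
    rw [ha, he]
    push_cast
    linear_combination hz

lemma oocfP'_succ (x : ℝ) (n : ℕ) :
    oocfP' x (n+1) = oocfA (oocfT^[n] x) * oocfP x n - oocfP' x n := rfl
lemma oocfQ'_succ (x : ℝ) (n : ℕ) :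
    oocfQ' x (n+1) = oocfA (oocfT^[n] x) * oocfQ x n - oocfQ' x n := rfl
lemma oocfP_succ (x : ℝ) (n : ℕ) :
    oocfP x (n+1) = 2 * (oocfA (oocfT^[n] x) * oocfP x n - oocfP' x n)
      + oocfE (oocfT^[n] x) * oocfP x n := rfl
lemma oocfQ_succ (x : ℝ) (n : ℕ) :
    oocfQ x (n+1) = 2 * (oocfA (oocfT^[n] x) * oocfQ x n - oocfQ' x n)
      + oocfE (oocfT^[n] x) * oocfQ x n := rfl
lemma oocfP''_succ (x : ℝ) (n : ℕ) :
    oocfP'' x (n+1) = oocfP' x (n+1) + oocfE (oocfT^[n] x) * oocfP x n := rfl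
lemma oocfQ''_succ (x : ℝ) (n : ℕ) :
    oocfQ'' x (n+1) = oocfQ' x (n+1) + oocfE (oocfT^[n] x) * oocfQ x n := rfl

lemma oocf_invariant (x : ℝ) (hx : x ∈ Set.Ioo (0:ℝ) 1) (hirr : Irrational x) (n : ℕ) :
    Irrational (oocfT^[n] x) ∧ oocfT^[n] x ∈ Set.Ioo (0:ℝ) 1 ∧
    0 ≤ oocfQ' x n ∧ 1 ≤ oocfQ'' x n ∧
    oocfP x n = oocfP' x n + oocfP'' x n ∧
    oocfQ x n = oocfQ' x n + oocfQ'' x n ∧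
    (oocfP' x n * oocfQ'' x n - oocfP'' x n * oocfQ' x n = 1 ∨
      oocfP' x n * oocfQ'' x n - oocfP'' x n * oocfQ' x n = -1) ∧
    Odd (oocfP x n) ∧ Odd (oocfQ x n) ∧ Odd (oocfP' x n + oocfQ' x n) ∧
    Odd (oocfP'' x n + oocfQ'' x n) ∧
    x * ((oocfQ'' x n : ℝ) + (oocfQ' x n : ℝ) * oocfT^[n] x)
      = (oocfP'' x n : ℝ) + (oocfP' x n : ℝ) * oocfT^[n] x := by
  induction n with
  | zero =>
    refine ⟨hirr, hx, ?_, ?_, ?_, ?_, ?_, ?_, ?_, ?_, ?_, ?_⟩ <;>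
      simp [oocfP', oocfQ', oocfP, oocfQ, oocfP'', oocfQ'', oocfConv]
  | succ n IH =>
    obtain ⟨hti, htI, hq'0, hq''1, hps, hqs, hdet, hop, hoq, hopq', hopq'', heq⟩ := IH
    obtain ⟨htI', hti', ha1, hecases, hyeq⟩ := oocf_step htI hti
    have hiter : oocfT^[n+1] x = oocfT (oocfT^[n] x) := Function.iterate_succ_apply' oocfT n x
    have hEpq : Even (oocfP x n + oocfQ x n) := hop.add_odd hoq
    have hq1 : 1 ≤ oocfQ x n := by omega
    have haq : oocfQ x n ≤ oocfA (oocfT^[n] x) * oocfQ x n :=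
      le_mul_of_one_le_left (by omega) ha1
    refine ⟨by rw [hiter]; exact hti', by rw [hiter]; exact htI',
      ?_, ?_, ?_, ?_, ?_, ?_, ?_, ?_, ?_, ?_⟩
    · rw [oocfQ'_succ]; linarith
    · rw [oocfQ''_succ, oocfQ'_succ]
      rcases hecases with he1 | ⟨he1, ha2⟩
      · rw [he1]; linarith
      · rw [he1]
        have h2q : 2 * oocfQ x n ≤ oocfA (oocfT^[n] x) * oocfQ x n :=
          mul_le_mul_of_nonneg_right ha2 (by omega)
        linarith
    · rw [oocfP_succ, oocfP''_succ, oocfP'_succ]; ring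
    · rw [oocfQ_succ, oocfQ''_succ, oocfQ'_succ]; ring
    · have key : oocfP' x (n+1) * oocfQ'' x (n+1) - oocfP'' x (n+1) * oocfQ' x (n+1)
          = -oocfE (oocfT^[n] x) * (oocfP' x n * oocfQ'' x n - oocfP'' x n * oocfQ' x n) := by
        rw [oocfP''_succ, oocfQ''_succ, oocfP'_succ, oocfQ'_succ, hps, hqs]; ring
      rcases hdet with h | h <;> rcases hecases with he1 | ⟨he1, _⟩ <;>
        rw [key, h, he1] <;> norm_num
    · rw [oocfP_succ]
      refine (even_two_mul _).add_odd ?_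
      rcases hecases with he1 | ⟨he1, _⟩ <;> rw [he1]
      · simpa using hop
      · simpa using hop.neg
    · rw [oocfQ_succ]
      refine (even_two_mul _).add_odd ?_
      rcases hecases with he1 | ⟨he1, _⟩ <;> rw [he1]
      · simpa using hoq
      · simpa using hoq.neg
    · have h2 : oocfP' x (n+1) + oocfQ' x (n+1)
          = oocfA (oocfT^[n] x) * (oocfP x n + oocfQ x n) - (oocfP' x n + oocfQ' x n) := by
        rw [oocfP'_succ, oocfQ'_succ]; ring
      rw [h2]
      exact (hEpq.mul_left _).sub_odd hopq'
    · have h2 : oocfP'' x (n+1) + oocfQ'' x (n+1)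
          = (oocfA (oocfT^[n] x) * (oocfP x n + oocfQ x n) - (oocfP' x n + oocfQ' x n))
            + oocfE (oocfT^[n] x) * (oocfP x n + oocfQ x n) := by
        rw [oocfP''_succ, oocfQ''_succ, oocfP'_succ, oocfQ'_succ]; ring
      rw [h2]
      exact ((hEpq.mul_left _).sub_odd hopq').add_even (hEpq.mul_left _)
    · rw [hiter, oocfQ''_succ, oocfQ'_succ, oocfP''_succ, oocfP'_succ, hps, hqs]
      push_cast
      linear_combination (((oocfA (oocfT^[n] x) : ℝ) + (oocfE (oocfT^[n] x) : ℝ))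
          + (oocfA (oocfT^[n] x) : ℝ) * oocfT (oocfT^[n] x)) * heq
        + ((oocfP' x n : ℝ) - x * (oocfQ' x n : ℝ)) * hyeq


/-- For every irrational `x ∈ (0,1)` and every `n ≥ 0`, the `n`-th principal convergent
`p_n/q_n` of the odd-odd continued fraction of `x` is a best 1-rational approximation
of `x`. -/
theorem oocf_principal_convergent_isBestOneRatApprox
    (x : ℝ) (hx : x ∈ Set.Ioo (0 : ℝ) 1) (hirr : Irrational x) (n : ℕ) :
    IsBestOneRatApprox x (oocfP x n) (oocfQ x n) := by
  obtain ⟨hti, htI, hq'0, hq''1, hps, hqs, hdet, hop, hoq, hopq', hopq'', heq⟩ :=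
    oocf_invariant x hx hirr n
  obtain ⟨ht0, ht1⟩ := htI
  -- notation
  set t : ℝ := oocfT^[n] x with htdef
  set P : ℤ := oocfP x n
  set Q : ℤ := oocfQ x n
  set P' : ℤ := oocfP' x n
  set Q' : ℤ := oocfQ' x n
  set P'' : ℤ := oocfP'' x n
  set Q'' : ℤ := oocfQ'' x n
  have hQpos : 0 < Q := by omega
  -- determinant in (P,Q,P'',Q'') form
  obtain ⟨d, hd, hdet2⟩ : ∃ d : ℤ, (d = 1 ∨ d = -1) ∧ P * Q'' - P'' * Q = d := by
    rcases hdet with h | h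
    · exact ⟨1, Or.inl rfl, by rw [hps, hqs]; linear_combination h⟩
    · exact ⟨-1, Or.inr rfl, by rw [hps, hqs]; linear_combination h⟩
  have hdd : d * d = 1 := by rcases hd with h | h <;> rw [h] <;> ring
  have hcop : IsCoprime P Q := ⟨d * Q'', -(d * P''), by linear_combination d * hdet2 + hdd⟩
  refine ⟨⟨hQpos, hop, hoq, hcop⟩, ?_⟩
  intro A B hAB hBle hne
  obtain ⟨hBpos, hoA, hoB, _⟩ := hAB
  -- express (A,B) in the basis (P,Q), (P'',Q'')
  obtain ⟨m, l, hA', hB'⟩ : ∃ m l : ℤ, A = m * P + l * P'' ∧ B = m * Q + l * Q'' :=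
    ⟨d * (A * Q'' - B * P''), d * (B * P - A * Q),
      by linear_combination (-(d * A)) * hdet2 - A * hdd,
      by linear_combination (-(d * B)) * hdet2 - B * hdd⟩
  -- parity: l even, m odd
  have hlE : Even l := by
    by_contra hlodd
    rw [Int.not_even_iff_odd] at hlodd
    have h1 : Even (l * (P'' + Q'')) := by
      have e1 : Even (A + B) := hoA.add_odd hoB
      have e2 : Even (m * (P + Q)) := (hop.add_odd hoq).mul_left m
      have h3 : l * (P'' + Q'') = (A + B) - m * (P + Q) := by
        rw [hA', hB']; ring
      rw [h3]; exact e1.sub e2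
    exact (Int.not_odd_iff_even.mpr h1) (hlodd.mul hopq'')
  have hmO : Odd m := by
    have h1 : Odd (m * P) := by
      have h2 : m * P = A - l * P'' := by rw [hA']; ring
      rw [h2]; exact hoA.sub_even (hlE.mul_right _)
    exact (Int.odd_mul.mp h1).1
  -- real facts
  have hDen : (0:ℝ) < (Q'':ℝ) + (Q':ℝ) * t := by
    have h1 : (1:ℝ) ≤ (Q'':ℝ) := by exact_mod_cast hq''1
    have h2 : (0:ℝ) ≤ (Q':ℝ) := by exact_mod_cast hq'0
    nlinarith
  have hdr : (P':ℝ) * (Q'':ℝ) - (P'':ℝ) * (Q':ℝ) = (d:ℝ) := by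
    have : (P':ℝ) * Q'' - (P'':ℝ) * Q' = ((P * Q'' - P'' * Q : ℤ) : ℝ) := by
      push_cast [hps, hqs]; ring
    rw [this, hdet2]
  have h1 : ((Q:ℝ) * x - (P:ℝ)) * ((Q'':ℝ) + (Q':ℝ) * t) = (d:ℝ) * (t - 1) := by
    rw [hps, hqs]
    push_cast
    linear_combination ((Q':ℝ) + (Q'':ℝ)) * heq + (t - 1) * hdr
  have h3 : ((Q'':ℝ) * x - (P'':ℝ)) * ((Q'':ℝ) + (Q':ℝ) * t) = (d:ℝ) * t := by
    linear_combination (Q'':ℝ) * heq + t * hdr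
  have hAr : (A:ℝ) = (m:ℝ) * P + (l:ℝ) * P'' := by exact_mod_cast hA'
  have hBr : (B:ℝ) = (m:ℝ) * Q + (l:ℝ) * Q'' := by exact_mod_cast hB'
  have h2 : ((B:ℝ) * x - (A:ℝ)) * ((Q'':ℝ) + (Q':ℝ) * t)
      = (d:ℝ) * ((m:ℝ) * (t - 1) + (l:ℝ) * t) := by
    rw [hAr, hBr]
    linear_combination (m:ℝ) * h1 + (l:ℝ) * h3
  have habs1 : |(Q:ℝ) * x - (P:ℝ)| * ((Q'':ℝ) + (Q':ℝ) * t) = 1 - t := by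
    have := abs_mul ((Q:ℝ) * x - (P:ℝ)) ((Q'':ℝ) + (Q':ℝ) * t)
    rw [abs_of_pos hDen] at this
    rw [← this, h1, abs_mul]
    have hd1 : |(d:ℝ)| = 1 := by rcases hd with h | h <;> rw [h] <;> norm_num
    rw [hd1, abs_of_neg (by linarith : t - 1 < 0)]
    ring
  have habs2 : |(B:ℝ) * x - (A:ℝ)| * ((Q'':ℝ) + (Q':ℝ) * t)
      = |(m:ℝ) * (t - 1) + (l:ℝ) * t| := by
    have := abs_mul ((B:ℝ) * x - (A:ℝ)) ((Q'':ℝ) + (Q':ℝ) * t)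
    rw [abs_of_pos hDen] at this
    rw [← this, h2, abs_mul]
    have hd1 : |(d:ℝ)| = 1 := by rcases hd with h | h <;> rw [h] <;> norm_num
    rw [hd1, one_mul]
  -- the key inequality
  have key : 1 - t < |(m:ℝ) * (t - 1) + (l:ℝ) * t| := by
    rcases eq_or_ne l 0 with hl0 | hl0
    · -- l = 0 forces (A,B) = (P,Q)
      exfalso
      have hm1 : m = 1 := by
        have hb : B = m * Q := by rw [hB', hl0]; ring
        have h4 : 0 < m := by
          by_contra h
          push_neg at h
          have : m * Q ≤ 0 := mul_nonpos_of_nonpos_of_nonneg h (by omega)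
          omega
        have h5 : m ≤ 1 := by
          by_contra h
          push_neg at h
          have : 2 * Q ≤ m * Q := mul_le_mul_of_nonneg_right (by omega) (by omega)
          omega
        omega
      apply hne
      rw [hA', hB', hm1, hl0]
      norm_num
    · have hl2 : 2 ≤ l ∨ l ≤ -2 := by
        rcases hlE with ⟨r, hr⟩
        omega
      rcases hl2 with hl2 | hl2
      · -- l ≥ 2 forces m ≤ -1
        have hm : m ≤ -1 := by
          have h4 : m ≤ 0 := by
            by_contra h
            push_neg at h
            have h5 : Q ≤ m * Q := le_mul_of_one_le_left (by omega) h
            have h6 : 2 * Q'' ≤ l * Q'' := mul_le_mul_of_nonneg_right hl2 (by omega)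
            omega
          rcases hmO with ⟨r, hr⟩
          omega
        have hmr : (m:ℝ) ≤ -1 := by exact_mod_cast hm
        have hlr : (2:ℝ) ≤ (l:ℝ) := by exact_mod_cast hl2
        have hpos : 1 + t ≤ (m:ℝ) * (t - 1) + (l:ℝ) * t := by nlinarith
        rw [abs_of_pos (by linarith)]
        linarith
      · -- l ≤ -2 forces m ≥ 1
        have hm : 1 ≤ m := by
          by_contra h
          push_neg at h
          have h4 : m ≤ 0 := by omega
          have h5 : m * Q ≤ 0 := mul_nonpos_of_nonpos_of_nonneg h4 (by omega)
          have h6 : l * Q'' ≤ -2 * Q'' := mul_le_mul_of_nonneg_right hl2 (by omega)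
          omega
        have hmr : (1:ℝ) ≤ (m:ℝ) := by exact_mod_cast hm
        have hlr : (l:ℝ) ≤ -2 := by exact_mod_cast hl2
        have hneg : (m:ℝ) * (t - 1) + (l:ℝ) * t ≤ -(1 + t) := by nlinarith
        rw [abs_of_neg (by linarith)]
        linarith
  have hfin : |(Q:ℝ) * x - (P:ℝ)| * ((Q'':ℝ) + (Q':ℝ) * t)
      < |(B:ℝ) * x - (A:ℝ)| * ((Q'':ℝ) + (Q':ℝ) * t) := by
    rw [habs1, habs2]; exact key
  exact lt_of_mul_lt_mul_right hfin hDen.le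
end

section
/- Let x ∈ (0,1) be irrational and suppose there exist integers α, β, γ with α ≠ 0 such that α·x² + β·x + γ = 0 (i.e., x is a quadratic irrational). Then the orbit of x under the odd-odd continued fraction map T is eventually periodic: there exist integers 0 ≤ i < j with T^i(x) = T^j(x). -/
lemma not_int_linear {x : ℝ} (hirr : Irrational x) (a b : ℤ) (hb : b ≠ 0)
    (h : (b : ℝ) * x = (a : ℝ)) : False := by
  have hbR : (b : ℝ) ≠ 0 := Int.cast_ne_zero.mpr hb
  apply hirr
  refine ⟨(a : ℚ) / (b : ℚ), ?_⟩
  push_cast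
  rw [div_eq_iff hbR]
  linarith

lemma irrational_of_moebius {z w : ℝ} (hirr : Irrational z) (a b c d : ℤ)
    (hden : (c : ℝ) * w + (d : ℝ) ≠ 0)
    (heq : (a : ℝ) * w + (b : ℝ) = z * ((c : ℝ) * w + (d : ℝ))) : Irrational w := by
  rintro ⟨q, hq⟩
  apply hirr
  refine ⟨((a : ℚ) * q + b) / ((c : ℚ) * q + d), ?_⟩
  have hden' : (c : ℝ) * (q : ℝ) + (d : ℝ) ≠ 0 := by rw [hq]; exact hden
  push_cast
  rw [div_eq_iff hden', hq]
  linarith [heq]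

lemma oocf_step_s3 (z : ℝ) (hz0 : 0 < z) (hz1 : z < 1) (hirr : Irrational z) :
    ∃ a b c d : ℤ, 0 ≤ a ∧ 0 ≤ b ∧ a ≤ c ∧ b ≤ d ∧ 1 ≤ c ∧ 1 ≤ d ∧
      (a * d - b * c) ^ 2 = 1 ∧ 0 < oocfT z ∧ oocfT z < 1 ∧ Irrational (oocfT z) ∧
      (a : ℝ) * oocfT z + (b : ℝ) = z * ((c : ℝ) * oocfT z + (d : ℝ)) := by
  have hz1' : (0:ℝ) < 1 - z := by linarith
  set k : ℤ := ⌊1 / (1 - z)⌋ with hk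
  have hk1 : 1 ≤ k := by
    rw [hk, Int.le_floor]
    rw [show ((1:ℤ):ℝ) = 1 by norm_num, le_div_iff₀ hz1']
    linarith
  have hkR : (1:ℝ) ≤ (k:ℝ) := by exact_mod_cast hk1
  have hfl : (k:ℝ) ≤ 1 / (1 - z) := Int.floor_le _
  have hfu : 1 / (1 - z) < (k:ℝ) + 1 := Int.lt_floor_add_one _
  have h1 : (k:ℝ) * (1 - z) ≤ 1 := (le_div_iff₀ hz1').mp hfl
  have h2 : 1 < ((k:ℝ) + 1) * (1 - z) := (div_lt_iff₀ hz1').mp hfu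
  have hden : 0 < (k:ℝ) - ((k:ℝ) + 1) * z := by nlinarith
  have hnum0 : (k:ℝ) - 1 ≤ (k:ℝ) * z := by nlinarith
  have hnum : (k:ℝ) - 1 < (k:ℝ) * z := by
    rcases lt_or_eq_of_le hnum0 with hlt | heq
    · exact hlt
    · exact absurd heq (fun heq => not_int_linear hirr (k - 1) k (by omega) (by push_cast; linarith))
  have hzne : z ≠ 1 := ne_of_lt hz1
  have h2k1 : (0:ℝ) < 2 * (k:ℝ) + 1 := by linarith
  by_cases hbr : z < (2 * (k:ℝ) - 1) / (2 * (k:ℝ) + 1)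
  · have hT : oocfT z = ((k:ℝ) * z - ((k:ℝ) - 1)) / ((k:ℝ) - ((k:ℝ) + 1) * z) := by
      rw [oocfT, if_neg hzne, ← hk, if_pos hbr]
    have hbr' : (2 * (k:ℝ) + 1) * z < 2 * (k:ℝ) - 1 := by
      rw [lt_div_iff₀ h2k1] at hbr; linarith
    have hT0 : 0 < oocfT z := by rw [hT]; exact div_pos (by linarith) hden
    have hT1 : oocfT z < 1 := by rw [hT, div_lt_one hden]; linarith
    have hDmul : oocfT z * ((k:ℝ) - ((k:ℝ) + 1) * z) = (k:ℝ) * z - ((k:ℝ) - 1) := by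
      rw [hT]; exact div_mul_cancel₀ _ hden.ne'
    have heq : (k:ℝ) * oocfT z + ((k:ℝ) - 1) = z * (((k:ℝ) + 1) * oocfT z + (k:ℝ)) := by
      linear_combination hDmul
    have heqZ : ((k:ℤ):ℝ) * oocfT z + ((k - 1 : ℤ):ℝ)
        = z * (((k + 1 : ℤ):ℝ) * oocfT z + ((k:ℤ):ℝ)) := by push_cast; linarith [heq]
    have hdenne : ((k + 1 : ℤ):ℝ) * oocfT z + ((k:ℤ):ℝ) ≠ 0 := by
      push_cast; nlinarith
    refine ⟨k, k - 1, k + 1, k, by omega, by omega, by omega, by omega, by omega, by omega,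
      by ring, hT0, hT1, irrational_of_moebius hirr k (k-1) (k+1) k hdenne heqZ, heqZ⟩
  · have hge : (2 * (k:ℝ) - 1) / (2 * (k:ℝ) + 1) ≤ z := not_lt.mp hbr
    have hgt : (2 * (k:ℝ) - 1) / (2 * (k:ℝ) + 1) < z := by
      rcases lt_or_eq_of_le hge with hlt | heqq
      · exact hlt
      · exfalso
        refine not_int_linear hirr (2 * k - 1) (2 * k + 1) (by omega) ?_
        push_cast
        rw [← heqq]
        field_simp
    have hbr2 : 2 * (k:ℝ) - 1 < (2 * (k:ℝ) + 1) * z := by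
      rw [div_lt_iff₀ h2k1] at hgt; linarith
    have hT : oocfT z = ((k:ℝ) - ((k:ℝ) + 1) * z) / ((k:ℝ) * z - ((k:ℝ) - 1)) := by
      rw [oocfT, if_neg hzne, ← hk, if_neg hbr]
    have hT0 : 0 < oocfT z := by rw [hT]; exact div_pos hden (by linarith)
    have hT1 : oocfT z < 1 := by rw [hT, div_lt_one (by linarith)]; linarith
    have hNne : (0:ℝ) < (k:ℝ) * z - ((k:ℝ) - 1) := by linarith
    have hNmul : oocfT z * ((k:ℝ) * z - ((k:ℝ) - 1)) = (k:ℝ) - ((k:ℝ) + 1) * z := by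
      rw [hT]; exact div_mul_cancel₀ _ hNne.ne'
    have heq : ((k:ℝ) - 1) * oocfT z + (k:ℝ) = z * ((k:ℝ) * oocfT z + ((k:ℝ) + 1)) := by
      linear_combination (-1 : ℝ) * hNmul
    have heqZ : ((k - 1 : ℤ):ℝ) * oocfT z + ((k:ℤ):ℝ)
        = z * (((k:ℤ):ℝ) * oocfT z + ((k + 1 : ℤ):ℝ)) := by push_cast; linarith [heq]
    have hdenne : ((k:ℤ):ℝ) * oocfT z + ((k + 1 : ℤ):ℝ) ≠ 0 := by
      push_cast; nlinarith
    refine ⟨k - 1, k, k, k + 1, by omega, by omega, by omega, by omega, by omega, by omega,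
      by ring, hT0, hT1, irrational_of_moebius hirr (k-1) k k (k+1) hdenne heqZ, heqZ⟩

lemma oocf_matrix (x : ℝ) (hx0 : 0 < x) (hx1 : x < 1) (hirr : Irrational x) (n : ℕ) :
    ∃ p q r s : ℤ, 0 ≤ p ∧ 0 ≤ r ∧ 1 ≤ q ∧ 1 ≤ s ∧ p ≤ q ∧ r ≤ s ∧
      (p * s - q * r) ^ 2 = 1 ∧ 0 < oocfT^[n + 1] x ∧ oocfT^[n + 1] x < 1 ∧
      Irrational (oocfT^[n + 1] x) ∧
      ((p : ℝ) * oocfT^[n + 1] x + (r : ℝ) = x * ((q : ℝ) * oocfT^[n + 1] x + (s : ℝ))) := by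
  induction n with
  | zero =>
    obtain ⟨a, b, c, d, ha, hb, hac, hbd, hc, hd, hdet, h0, h1, hirr', heq⟩ :=
      oocf_step_s3 x hx0 hx1 hirr
    rw [show (0 + 1 : ℕ) = 1 from rfl, Function.iterate_one]
    exact ⟨a, c, b, d, ha, hb, hc, hd, hac, hbd,
      by rw [show a * d - c * b = a * d - b * c from by ring]; exact hdet,
      h0, h1, hirr', heq⟩
  | succ n ih =>
    obtain ⟨p, q, r, s, hp, hr, hq, hs, hpq, hrs, hdet, hy0, hy1, hyirr, hmeq⟩ := ih
    obtain ⟨a, b, c, d, ha, hb, hac, hbd, hc, hd, hdet2, h0, h1, hirr', heq⟩ :=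
      oocf_step_s3 (oocfT^[n + 1] x) hy0 hy1 hyirr
    have hit : oocfT^[n + 1 + 1] x = oocfT (oocfT^[n + 1] x) := Function.iterate_succ_apply' _ _ _
    refine ⟨p * a + r * c, q * a + s * c, p * b + r * d, q * b + s * d,
      by positivity, by positivity, by nlinarith, by nlinarith, by nlinarith, by nlinarith,
      ?_, by rw [hit]; exact h0, by rw [hit]; exact h1, by rw [hit]; exact hirr', ?_⟩
    · have : (p * a + r * c) * (q * b + s * d) - (q * a + s * c) * (p * b + r * d)
          = (p * s - q * r) * (a * d - b * c) := by ring
      rw [this, mul_pow, hdet, hdet2, one_mul]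
    · rw [hit]
      push_cast
      set w := oocfT (oocfT^[n + 1] x)
      linear_combination ((p : ℝ) - x * (q : ℝ)) * heq + ((c : ℝ) * w + (d : ℝ)) * hmeq

lemma int_abs_le_sq (m : ℤ) : |m| ≤ m ^ 2 := by
  rcases (abs_nonneg m).eq_or_lt with h | h
  · rw [← h]; positivity
  · have h1 : 1 ≤ |m| := h
    calc |m| = |m| * 1 := by ring
      _ ≤ |m| * |m| := by exact mul_le_mul_of_nonneg_left h1 (abs_nonneg m)
      _ = m ^ 2 := by rw [← sq, sq_abs]

def oocfKb (α β γ : ℤ) : ℤ := β ^ 2 + 4 * (|α| * |γ|) + 4 * (2 * |α| + |β|) ^ 2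

set_option maxHeartbeats 2000000 in
lemma oocf_coeffs (x : ℝ) (hx0 : 0 < x) (hx1 : x < 1) (hirr : Irrational x)
    (α β γ : ℤ) (hα : α ≠ 0) (h : (α : ℝ) * x ^ 2 + (β : ℝ) * x + (γ : ℝ) = 0) (n : ℕ) :
    ∃ A B C : ℤ, A ≠ 0 ∧ |A| ≤ oocfKb α β γ ∧ |B| ≤ oocfKb α β γ ∧ |C| ≤ oocfKb α β γ ∧
      ((A : ℝ) * (oocfT^[n + 1] x) ^ 2 + (B : ℝ) * (oocfT^[n + 1] x) + (C : ℝ) = 0) := by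
  obtain ⟨p, q, r, s, hp, hr, hq, hs, hpq, hrs, hdet, hy0, hy1, hyirr, hmeq⟩ :=
    oocf_matrix x hx0 hx1 hirr n
  set y := oocfT^[n + 1] x with hydef
  have hq0 : q ≠ 0 := by omega
  have hs0 : s ≠ 0 := by omega
  have hpR : (0:ℝ) ≤ (p:ℝ) := by exact_mod_cast hp
  have hrR : (0:ℝ) ≤ (r:ℝ) := by exact_mod_cast hr
  have hqR : (1:ℝ) ≤ (q:ℝ) := by exact_mod_cast hq
  have hsR : (1:ℝ) ≤ (s:ℝ) := by exact_mod_cast hs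
  have hpqR : (p:ℝ) ≤ (q:ℝ) := by exact_mod_cast hpq
  have hrsR : (r:ℝ) ≤ (s:ℝ) := by exact_mod_cast hrs
  have hdetR : ((p:ℝ) * s - q * r) ^ 2 = 1 := by exact_mod_cast hdet
  -- nonvanishing of A and C
  have hAne : α * p ^ 2 + β * (p * q) + γ * q ^ 2 ≠ 0 := by
    intro h0
    have h0R : (α:ℝ) * p ^ 2 + β * (p * q) + γ * q ^ 2 = 0 := by exact_mod_cast h0
    have hfac : ((p:ℝ) - q * x) * ((α:ℝ) * ((p:ℝ) + q * x) + β * q) = 0 := by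
      linear_combination h0R - (q:ℝ) ^ 2 * h
    rcases mul_eq_zero.mp hfac with hc | hc
    · exact not_int_linear hirr p q hq0 (by linarith)
    · exact not_int_linear hirr (-(α * p + β * q)) (α * q) (mul_ne_zero hα hq0)
        (by push_cast; linear_combination hc)
  have hCne : α * r ^ 2 + β * (r * s) + γ * s ^ 2 ≠ 0 := by
    intro h0
    have h0R : (α:ℝ) * r ^ 2 + β * (r * s) + γ * s ^ 2 = 0 := by exact_mod_cast h0
    have hfac : ((r:ℝ) - s * x) * ((α:ℝ) * ((r:ℝ) + s * x) + β * s) = 0 := by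
      linear_combination h0R - (s:ℝ) ^ 2 * h
    rcases mul_eq_zero.mp hfac with hc | hc
    · exact not_int_linear hirr r s hs0 (by linarith)
    · exact not_int_linear hirr (-(α * r + β * s)) (α * s) (mul_ne_zero hα hs0)
        (by push_cast; linear_combination hc)
  -- the quadratic equation for y
  have heqn : ((α * p ^ 2 + β * (p * q) + γ * q ^ 2 : ℤ) : ℝ) * y ^ 2
      + ((2 * α * (p * r) + β * (p * s + q * r) + 2 * γ * (q * s) : ℤ) : ℝ) * y
      + ((α * r ^ 2 + β * (r * s) + γ * s ^ 2 : ℤ) : ℝ) = 0 := by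
    push_cast
    linear_combination ((q:ℝ) * y + s) ^ 2 * h
      + ((α:ℝ) * (((p:ℝ) * y + r) + x * ((q:ℝ) * y + s)) + (β:ℝ) * ((q:ℝ) * y + s)) * hmeq
  -- bounds
  set Dq : ℝ := (q:ℝ) * y + s with hDq
  have hDq1 : 1 ≤ Dq := by rw [hDq]; nlinarith
  have hDq0 : 0 < Dq := by linarith
  set G1 : ℝ := (α:ℝ) * ((p:ℝ) + q * x) + (β:ℝ) * q with hG1d
  set G2 : ℝ := (α:ℝ) * ((r:ℝ) + s * x) + (β:ℝ) * s with hG2d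
  have hApr : ((α * p ^ 2 + β * (p * q) + γ * q ^ 2 : ℤ) : ℝ) = ((p:ℝ) - q * x) * G1 := by
    rw [hG1d]; push_cast; linear_combination (q:ℝ) ^ 2 * h
  have hCpr : ((α * r ^ 2 + β * (r * s) + γ * s ^ 2 : ℤ) : ℝ) = ((r:ℝ) - s * x) * G2 := by
    rw [hG2d]; push_cast; linear_combination (s:ℝ) ^ 2 * h
  have hpqe : ((p:ℝ) - q * x) * Dq = (p:ℝ) * s - q * r := by
    rw [hDq]; linear_combination (q:ℝ) * hmeq
  have hrse : ((r:ℝ) - s * x) * Dq = -(y * ((p:ℝ) * s - q * r)) := by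
    rw [hDq]; linear_combination (s:ℝ) * hmeq
  have h1 : (((p:ℝ) - q * x) * Dq) * (((r:ℝ) - s * x) * Dq) = -(y * 1) := by
    rw [hpqe, hrse, ← hdetR]; ring
  have hACe : ((α * p ^ 2 + β * (p * q) + γ * q ^ 2 : ℤ) : ℝ)
      * ((α * r ^ 2 + β * (r * s) + γ * s ^ 2 : ℤ) : ℝ) * Dq ^ 2 = -(y * (G1 * G2)) := by
    rw [hApr, hCpr]
    linear_combination (G1 * G2) * h1
  set K0 : ℝ := 2 * |(α:ℝ)| + |(β:ℝ)| with hK0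
  have hK0nn : 0 ≤ K0 := by rw [hK0]; positivity
  have hqx : (q:ℝ) * x ≤ (q:ℝ) := mul_le_of_le_one_right (by linarith) hx1.le
  have hsx : (s:ℝ) * x ≤ (s:ℝ) := mul_le_of_le_one_right (by linarith) hx1.le
  have hPQx : 0 ≤ (p:ℝ) + q * x := add_nonneg hpR (mul_nonneg (by linarith) hx0.le)
  have hPQx2 : (p:ℝ) + q * x ≤ 2 * q := by linarith
  have hRSx : 0 ≤ (r:ℝ) + s * x := add_nonneg hrR (mul_nonneg (by linarith) hx0.le)
  have hRSx2 : (r:ℝ) + s * x ≤ 2 * s := by linarith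
  have hG1b : |G1| ≤ K0 * q := by
    rw [hG1d, hK0]
    calc |(α:ℝ) * ((p:ℝ) + q * x) + (β:ℝ) * q|
        ≤ |(α:ℝ) * ((p:ℝ) + q * x)| + |(β:ℝ) * q| := abs_add_le _ _
      _ = |(α:ℝ)| * ((p:ℝ) + q * x) + |(β:ℝ)| * q := by
          rw [abs_mul, abs_mul, abs_of_nonneg hPQx, abs_of_nonneg (by linarith : (0:ℝ) ≤ (q:ℝ))]
      _ ≤ |(α:ℝ)| * (2 * q) + |(β:ℝ)| * q := by nlinarith [abs_nonneg ((α:ℝ))]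
      _ = (2 * |(α:ℝ)| + |(β:ℝ)|) * q := by ring
  have hG2b : |G2| ≤ K0 * s := by
    rw [hG2d, hK0]
    calc |(α:ℝ) * ((r:ℝ) + s * x) + (β:ℝ) * s|
        ≤ |(α:ℝ) * ((r:ℝ) + s * x)| + |(β:ℝ) * s| := abs_add_le _ _
      _ = |(α:ℝ)| * ((r:ℝ) + s * x) + |(β:ℝ)| * s := by
          rw [abs_mul, abs_mul, abs_of_nonneg hRSx, abs_of_nonneg (by linarith : (0:ℝ) ≤ (s:ℝ))]
      _ ≤ |(α:ℝ)| * (2 * s) + |(β:ℝ)| * s := by nlinarith [abs_nonneg ((α:ℝ))]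
      _ = (2 * |(α:ℝ)| + |(β:ℝ)|) * s := by ring
  have hyQS : y * ((q:ℝ) * s) ≤ Dq ^ 2 := by
    rw [hDq]; nlinarith [sq_nonneg ((q:ℝ) * y), mul_nonneg (mul_nonneg (by linarith : (0:ℝ) ≤ (q:ℝ)) hy0.le) (by linarith : (0:ℝ) ≤ (s:ℝ))]
  have habs : |((α * p ^ 2 + β * (p * q) + γ * q ^ 2 : ℤ) : ℝ)|
      * |((α * r ^ 2 + β * (r * s) + γ * s ^ 2 : ℤ) : ℝ)| * Dq ^ 2 = y * (|G1| * |G2|) := by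
    have h2 := congrArg abs hACe
    rw [abs_mul, abs_mul, abs_neg, abs_mul, abs_mul,
      abs_of_nonneg hy0.le, abs_of_nonneg (by positivity : (0:ℝ) ≤ Dq ^ 2)] at h2
    linarith [h2]
  have hfinal : |((α * p ^ 2 + β * (p * q) + γ * q ^ 2 : ℤ) : ℝ)|
      * |((α * r ^ 2 + β * (r * s) + γ * s ^ 2 : ℤ) : ℝ)| ≤ K0 ^ 2 := by
    have h2 : y * (|G1| * |G2|) ≤ K0 ^ 2 * Dq ^ 2 := by
      calc y * (|G1| * |G2|) ≤ y * ((K0 * q) * (K0 * s)) := by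
            apply mul_le_mul_of_nonneg_left _ hy0.le
            exact mul_le_mul hG1b hG2b (abs_nonneg _) (by positivity)
        _ = K0 ^ 2 * (y * ((q:ℝ) * s)) := by ring
        _ ≤ K0 ^ 2 * Dq ^ 2 := by
            exact mul_le_mul_of_nonneg_left hyQS (by positivity)
    rw [← habs] at h2
    exact le_of_mul_le_mul_right h2 (by positivity)
  have hACZ : |α * p ^ 2 + β * (p * q) + γ * q ^ 2| * |α * r ^ 2 + β * (r * s) + γ * s ^ 2|
      ≤ (2 * |α| + |β|) ^ 2 := by
    rw [hK0] at hfinal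
    exact_mod_cast hfinal
  have hA1 : 1 ≤ |α * r ^ 2 + β * (r * s) + γ * s ^ 2| := Int.one_le_abs hCne
  have hC1 : 1 ≤ |α * p ^ 2 + β * (p * q) + γ * q ^ 2| := Int.one_le_abs hAne
  have hAb : |α * p ^ 2 + β * (p * q) + γ * q ^ 2| ≤ (2 * |α| + |β|) ^ 2 := by
    calc |α * p ^ 2 + β * (p * q) + γ * q ^ 2|
        = |α * p ^ 2 + β * (p * q) + γ * q ^ 2| * 1 := by ring
      _ ≤ |α * p ^ 2 + β * (p * q) + γ * q ^ 2| * |α * r ^ 2 + β * (r * s) + γ * s ^ 2| :=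
          mul_le_mul_of_nonneg_left hA1 (abs_nonneg _)
      _ ≤ (2 * |α| + |β|) ^ 2 := hACZ
  have hCb : |α * r ^ 2 + β * (r * s) + γ * s ^ 2| ≤ (2 * |α| + |β|) ^ 2 := by
    calc |α * r ^ 2 + β * (r * s) + γ * s ^ 2|
        = 1 * |α * r ^ 2 + β * (r * s) + γ * s ^ 2| := by ring
      _ ≤ |α * p ^ 2 + β * (p * q) + γ * q ^ 2| * |α * r ^ 2 + β * (r * s) + γ * s ^ 2| :=
          mul_le_mul_of_nonneg_right hC1 (abs_nonneg _)
      _ ≤ (2 * |α| + |β|) ^ 2 := hACZ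
  -- discriminant identity for B
  have hdisc : (2 * α * (p * r) + β * (p * s + q * r) + 2 * γ * (q * s)) ^ 2
      - 4 * ((α * p ^ 2 + β * (p * q) + γ * q ^ 2) * (α * r ^ 2 + β * (r * s) + γ * s ^ 2))
      = (β ^ 2 - 4 * (α * γ)) * (p * s - q * r) ^ 2 := by ring
  have hBsq : (2 * α * (p * r) + β * (p * s + q * r) + 2 * γ * (q * s)) ^ 2
      ≤ β ^ 2 + 4 * (|α| * |γ|) + 4 * (2 * |α| + |β|) ^ 2 := by
    have habsprod := abs_mul
      (α * p ^ 2 + β * (p * q) + γ * q ^ 2) (α * r ^ 2 + β * (r * s) + γ * s ^ 2)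
    have h3 : (α * p ^ 2 + β * (p * q) + γ * q ^ 2) * (α * r ^ 2 + β * (r * s) + γ * s ^ 2)
        ≤ (2 * |α| + |β|) ^ 2 := by
      calc _ ≤ |(α * p ^ 2 + β * (p * q) + γ * q ^ 2) * (α * r ^ 2 + β * (r * s) + γ * s ^ 2)| :=
            le_abs_self _
        _ = _ := habsprod
        _ ≤ _ := hACZ
    have h4 : -(α * γ) ≤ |α| * |γ| := by
      rw [← abs_mul]; exact neg_le_abs _
    have h6 : (2 * α * (p * r) + β * (p * s + q * r) + 2 * γ * (q * s)) ^ 2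
        = β ^ 2 - 4 * (α * γ)
          + 4 * ((α * p ^ 2 + β * (p * q) + γ * q ^ 2) * (α * r ^ 2 + β * (r * s) + γ * s ^ 2)) := by
      linear_combination hdisc + (β ^ 2 - 4 * (α * γ)) * hdet
    linarith [h3, h4, h6]
  have hBb : |2 * α * (p * r) + β * (p * s + q * r) + 2 * γ * (q * s)|
      ≤ β ^ 2 + 4 * (|α| * |γ|) + 4 * (2 * |α| + |β|) ^ 2 :=
    le_trans (int_abs_le_sq _) hBsq
  refine ⟨α * p ^ 2 + β * (p * q) + γ * q ^ 2,
    2 * α * (p * r) + β * (p * s + q * r) + 2 * γ * (q * s),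
    α * r ^ 2 + β * (r * s) + γ * s ^ 2, hAne, ?_, hBb, ?_, heqn⟩
  · unfold oocfKb
    have : (0:ℤ) ≤ β ^ 2 + 4 * (|α| * |γ|) := by positivity
    omega
  · unfold oocfKb
    have : (0:ℤ) ≤ β ^ 2 + 4 * (|α| * |γ|) := by positivity
    omega

lemma quad_root_unique (A B C : ℤ) (hA : A ≠ 0) (u v : ℝ)
    (hu : (A : ℝ) * u ^ 2 + (B : ℝ) * u + (C : ℝ) = 0)
    (hv : (A : ℝ) * v ^ 2 + (B : ℝ) * v + (C : ℝ) = 0)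
    (hs : (0 ≤ 2 * (A : ℝ) * u + (B : ℝ)) ↔ (0 ≤ 2 * (A : ℝ) * v + (B : ℝ))) : u = v := by
  by_contra hne
  have hAr : (A : ℝ) ≠ 0 := Int.cast_ne_zero.mpr hA
  have h1 : (u - v) * ((A : ℝ) * (u + v) + (B : ℝ)) = 0 := by linear_combination hu - hv
  have h2 : (A : ℝ) * (u + v) + (B : ℝ) = 0 := by
    rcases mul_eq_zero.mp h1 with h | h
    · exact absurd (sub_eq_zero.mp h) hne
    · exact h
  have h3 : 2 * (A : ℝ) * u + (B : ℝ) = -(2 * (A : ℝ) * v + (B : ℝ)) := by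
    linear_combination 2 * h2
  by_cases hc : 0 ≤ 2 * (A : ℝ) * u + (B : ℝ)
  · have hc' := hs.mp hc
    have e1 : 2 * (A : ℝ) * u + (B : ℝ) = 0 := by linarith
    have e2 : 2 * (A : ℝ) * v + (B : ℝ) = 0 := by linarith
    have : 2 * (A : ℝ) * u = 2 * (A : ℝ) * v := by linarith
    exact hne (mul_left_cancel₀ (by simpa using hAr) this)
  · have hc' : ¬ 0 ≤ 2 * (A : ℝ) * v + (B : ℝ) := fun hv' => hc (hs.mpr hv')
    push_neg at hc hc'
    linarith


/-- Every quadratic irrational `x ∈ (0,1)` has an eventually periodic orbit under the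
odd-odd continued fraction map. -/
theorem quadratic_irrational_oocf_eventually_periodic
    (x : ℝ) (hx : x ∈ Set.Ioo (0 : ℝ) 1) (hirr : Irrational x)
    (α β γ : ℤ) (hα : α ≠ 0) (h : (α : ℝ) * x ^ 2 + (β : ℝ) * x + (γ : ℝ) = 0) :
    ∃ i j : ℕ, i < j ∧ oocfT^[i] x = oocfT^[j] x := by
  classical
  obtain ⟨hx0, hx1⟩ := hx
  have key := fun n => oocf_coeffs x hx0 hx1 hirr α β γ hα h n
  choose A B C hA0 hAb hBb hCb heq using key
  set K : ℤ := oocfKb α β γ with hK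
  set F : ℕ → ℤ × ℤ × ℤ × Bool := fun n =>
    (A n, B n, C n, decide (0 ≤ 2 * (A n : ℝ) * (oocfT^[n + 1] x) + (B n : ℝ))) with hF
  set T : Finset (ℤ × ℤ × ℤ × Bool) :=
    (Finset.Icc (-K) K) ×ˢ (Finset.Icc (-K) K) ×ˢ (Finset.Icc (-K) K) ×ˢ (Finset.univ) with hT
  have hmaps : ∀ n ∈ Finset.range (T.card + 1), F n ∈ T := by
    intro n _
    rw [hF, hT]
    simp only [Finset.mem_product, Finset.mem_Icc, Finset.mem_univ, and_true]
    refine ⟨?_, ?_, ?_⟩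
    · have := abs_le.mp (hAb n); exact ⟨this.1, this.2⟩
    · have := abs_le.mp (hBb n); exact ⟨this.1, this.2⟩
    · have := abs_le.mp (hCb n); exact ⟨this.1, this.2⟩
  obtain ⟨i, hi, j, hj, hne, hfe⟩ :=
    Finset.exists_ne_map_eq_of_card_lt_of_maps_to
      (by rw [Finset.card_range]; exact lt_add_one _) hmaps
  have main : ∀ i j : ℕ, F i = F j → oocfT^[i + 1] x = oocfT^[j + 1] x := by
    intro i j hfij
    rw [hF] at hfij
    simp only [Prod.mk.injEq] at hfij
    obtain ⟨hAe, hBe, hCe, hbe⟩ := hfij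
    refine quad_root_unique (A i) (B i) (C i) (hA0 i) _ _ (heq i) ?_ ?_
    · rw [hAe, hBe, hCe]; exact heq j
    · rw [decide_eq_decide] at hbe
      rw [hAe, hBe] at hbe ⊢
      exact hbe
  rcases hne.lt_or_gt with hlt | hlt
  · exact ⟨i + 1, j + 1, by omega, main i j hfe⟩
  · exact ⟨j + 1, i + 1, by omega, (main i j hfe).symm⟩
end

section
/- Let E = [0, 1/2] ∪ {1}. For every x ∈ [0,1] there exists a least integer j ≥ 0 with R^j(x) ∈ E; denoting this least integer by n(x), one has T(x) = R^{n(x)+1}(x). In other words, the odd-odd continued fraction map T is the jump transformation associated to the Romik map R with respect to E. -/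
/-- The Romik map on `[0,1]`. -/
noncomputable def romik (x : ℝ) : ℝ :=
  if x ≤ 1 / 3 then x / (1 - 2 * x)
  else if x ≤ 1 / 2 then 1 / x - 2
  else 2 - 1 / x

lemma romik_low {x : ℝ} (h : x ≤ 1/3) : romik x = x / (1 - 2*x) := by
  rw [romik, if_pos h]

lemma romik_mid {x : ℝ} (h1 : ¬ x ≤ 1/3) (h2 : x ≤ 1/2) : romik x = 1/x - 2 := by
  rw [romik, if_neg h1, if_pos h2]

lemma romik_high {x : ℝ} (h : 1/2 < x) : romik x = 2 - 1/x := by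
  rw [romik, if_neg (by linarith), if_neg (by linarith)]

lemma notE {y : ℝ} (h1 : 1/2 < y) (h2 : y < 1) :
    y ∉ Set.Icc (0:ℝ) (1/2) ∪ {1} := by
  rintro (h | h)
  · exact absurd h.2 (not_le.mpr h1)
  · rw [Set.mem_singleton_iff] at h; rw [h] at h2; exact lt_irrefl 1 h2

lemma romik_iter (i : ℕ) : ∀ t : ℝ, (i:ℝ) + 2 ≤ t →
    romik^[i] ((t-1)/t) = (t - i - 1)/(t - i) := by
  induction i with
  | zero => intro t ht; simp
  | succ n ih =>
    intro t ht
    push_cast at ht ⊢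
    have hn : (0:ℝ) ≤ n := Nat.cast_nonneg n
    have ht0 : (0:ℝ) < t := by linarith
    have ht1 : t - 1 ≠ 0 := by intro h; nlinarith
    have h1 : romik ((t-1)/t) = ((t-1)-1)/(t-1) := by
      rw [romik_high (by rw [lt_div_iff₀ ht0]; linarith)]
      rw [one_div_div]
      field_simp
      ring
    rw [Function.iterate_succ_apply, h1, ih (t-1) (by linarith)]
    congr 1 <;> ring

lemma div_div_same {a b t : ℝ} (ht : t ≠ 0) (hb : b ≠ 0) : (a/t)/(b/t) = a/b := by
  field_simp


/-- The odd-odd continued fraction map is the jump transformation associated to the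
Romik map with respect to `E = [0, 1/2] ∪ {1}`: for every `x ∈ [0,1]` there is a least
`j ≥ 0` with `R^j(x) ∈ E`, and `T(x) = R^(j+1)(x)`. -/
theorem oocfT_jump_transformation_of_romik
    (x : ℝ) (hx : x ∈ Set.Icc (0 : ℝ) 1) :
    ∃ j : ℕ, romik^[j] x ∈ Set.Icc (0 : ℝ) (1 / 2) ∪ {1} ∧
      (∀ i < j, romik^[i] x ∉ Set.Icc (0 : ℝ) (1 / 2) ∪ {1}) ∧
      oocfT x = romik^[j + 1] x := by
  rcases eq_or_lt_of_le hx.2 with h1 | h1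
  · -- x = 1
    subst h1
    refine ⟨0, Set.mem_union_right _ rfl, fun i hi => absurd hi (Nat.not_lt_zero i), ?_⟩
    rw [Function.iterate_one, oocfT, if_pos rfl, romik, if_neg (by norm_num),
      if_neg (by norm_num)]
    norm_num
  rcases le_or_gt x (1/2) with h2 | h2
  · -- x ≤ 1/2 : j = 0
    have hne : x ≠ 1 := by intro h; rw [h] at h2; norm_num at h2
    refine ⟨0, Set.mem_union_left _ ⟨hx.1, h2⟩, fun i hi => absurd hi (Nat.not_lt_zero i), ?_⟩
    rw [Function.iterate_one]
    rcases lt_or_eq_of_le h2 with h2' | h2'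
    · -- x < 1/2
      have hfl : ⌊1/(1-x)⌋ = 1 := by
        rw [Int.floor_eq_iff]
        constructor
        · rw [le_div_iff₀ (by linarith)]; push_cast; linarith [hx.1]
        · rw [div_lt_iff₀ (by linarith)]; push_cast; linarith
      rw [oocfT, if_neg hne, hfl]
      push_cast
      norm_num
      rcases lt_trichotomy x (1/3) with h3 | h3 | h3
      · rw [if_pos h3, romik_low h3.le]
      · subst h3
        rw [if_neg (lt_irrefl _), romik_low (by norm_num)]
        norm_num
      · rw [if_neg (by linarith), romik_mid (by linarith) h2]
        have hx0 : x ≠ 0 := ne_of_gt (by linarith)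
        field_simp
    · -- x = 1/2
      subst h2'
      have hfl : ⌊1/(1-(1/2:ℝ))⌋ = 2 := by
        rw [Int.floor_eq_iff]; norm_num
      rw [oocfT, if_neg (by norm_num), hfl, romik_mid (by norm_num) le_rfl]
      norm_num
  · -- 1/2 < x < 1
    have h1x : 0 < 1 - x := by linarith
    set t : ℝ := 1/(1-x) with hT
    have ht2 : 2 < t := by rw [hT, lt_div_iff₀ h1x]; linarith
    have ht0 : (0:ℝ) < t := by linarith
    have hxe : (t-1)/t = x := by
      rw [hT]; field_simp; ring
    set k : ℤ := ⌊t⌋ with hK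
    have hkle : (k:ℝ) ≤ t := Int.floor_le t
    have hklt : t < k + 1 := Int.lt_floor_add_one t
    have hk2 : 2 ≤ k := Int.le_floor.mpr (by exact_mod_cast ht2.le)
    obtain ⟨m, hm⟩ : ∃ m : ℕ, k = (m:ℤ) + 2 := ⟨(k-2).toNat, by omega⟩
    have hmr : (k:ℝ) = (m:ℝ) + 2 := by exact_mod_cast hm
    have hne1 : x ≠ 1 := ne_of_lt h1
    clear_value t k
    have hiter : ∀ i : ℕ, (i:ℝ) ≤ m → romik^[i] x = (t - i - 1)/(t - i) := by
      intro i hi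
      rw [← hxe, romik_iter i t (by linarith)]
    have hnot : ∀ i : ℕ, (i:ℝ) + 2 < t → romik^[i] x ∉ Set.Icc (0:ℝ) (1/2) ∪ {1} := by
      intro i hi
      have him : (i:ℝ) ≤ m := by
        have h' : (i:ℝ) < (m:ℝ) + 1 := by linarith
        have : i < m + 1 := by exact_mod_cast h'
        exact_mod_cast Nat.lt_succ_iff.mp this
      rw [hiter i him]
      apply notE
      · rw [lt_div_iff₀ (by linarith)]; linarith
      · rw [div_lt_one (by linarith)]; linarith
    rcases eq_or_lt_of_le hkle with hteq | htlt
    · -- t = k, x = (k-1)/k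
      have hRm : romik^[m] x = 1/2 := by
        rw [hiter m le_rfl, ← hteq, hmr]
        rw [div_eq_div_iff (by norm_num) (by norm_num)]
        ring
      refine ⟨m, ?_, ?_, ?_⟩
      · rw [hRm]; exact Set.mem_union_left _ ⟨by norm_num, le_rfl⟩
      · intro i hi
        apply hnot
        have : (i:ℝ) < m := by exact_mod_cast hi
        linarith
      · have hR1 : romik^[m+1] x = 0 := by
          rw [Function.iterate_succ_apply', hRm, romik_mid (by norm_num) le_rfl]
          norm_num
        rw [hR1, oocfT, if_neg hne1, ← hT, ← hK]
        rw [if_pos ?_]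
        · rw [div_eq_zero_iff]; left
          rw [← hxe, ← hteq, hmr]
          field_simp
          ring
        · rw [← hxe, ← hteq, hmr]
          rw [div_lt_div_iff₀ (by positivity) (by positivity)]
          nlinarith [Nat.cast_nonneg (α := ℝ) m]
    · -- k < t < k+1
      have hRm : romik^[m] x = (t - m - 1)/(t-m) := hiter m le_rfl
      have hb1 : 2 < t - m := by linarith
      have hb2 : t - m < 3 := by linarith
      have hz : romik^[m+1] x = (t - (k:ℝ))/(t - k + 1) := by
        rw [Function.iterate_succ_apply', hRm,
          romik_high (by rw [lt_div_iff₀ (by linarith)]; linarith)]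
        have hd : t - (m:ℝ) - 1 ≠ 0 := by intro h; nlinarith
        rw [one_div_div, hmr, eq_div_iff (show t - ((m:ℝ)+2) + 1 ≠ 0 by
          intro h; nlinarith)]
        field_simp
        ring
      set z := (t - (k:ℝ))/(t - k + 1) with hZ
      have htk : (0:ℝ) < t - k := by linarith
      have htk1 : (0:ℝ) < t - k + 1 := by linarith
      have hzmem : z ∈ Set.Icc (0:ℝ) (1/2) := by
        constructor
        · positivity
        · rw [hZ, div_le_div_iff₀ htk1 (by norm_num)]
          linarith
      refine ⟨m+1, ?_, ?_, ?_⟩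
      · rw [hz]; exact Set.mem_union_left _ hzmem
      · intro i hi
        apply hnot
        have : (i:ℝ) ≤ m := by exact_mod_cast Nat.lt_succ_iff.mp hi
        linarith
      · rw [show m+1+1 = m+2 from rfl, Function.iterate_succ_apply', hz]
        have htne : t ≠ 0 := ne_of_gt ht0
        have e1 : (k:ℝ)*x - ((k:ℝ)-1) = (t - k)/t := by
          rw [← hxe]; field_simp; ring
        have e2 : (k:ℝ) - ((k:ℝ)+1)*x = ((k:ℝ)+1-t)/t := by
          rw [← hxe]; field_simp; ring
        have hk1t : (0:ℝ) < (k:ℝ)+1-t := by linarith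
        have hthr : x < (2*(k:ℝ)-1)/(2*(k:ℝ)+1) ↔ t < (k:ℝ) + 1/2 := by
          rw [← hxe, div_lt_div_iff₀ ht0 (by nlinarith)]
          constructor <;> intro h <;> nlinarith
        rw [oocfT, if_neg hne1, ← hT, ← hK]
        rcases lt_trichotomy t ((k:ℝ) + 1/2) with hc | hc | hc
        · -- first branch, z < 1/3
          have hz3 : z ≤ 1/3 := by
            rw [hZ, div_le_div_iff₀ htk1 (by norm_num)]; linarith
          rw [if_pos (hthr.mpr hc), e1, e2, div_div_same htne (ne_of_gt hk1t)]
          rw [romik_low hz3, hZ]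
          have hden : 1 - 2*((t-(k:ℝ))/(t-k+1)) = ((k:ℝ)+1-t)/(t-k+1) := by
            field_simp; ring
          rw [hden, div_div_same (ne_of_gt htk1) (ne_of_gt hk1t)]
        · -- t = k + 1/2
          have hz3 : z = 1/3 := by
            rw [hZ, hc]; norm_num
          rw [if_neg (by rw [hthr]; linarith), e1, e2,
            div_div_same htne (ne_of_gt htk)]
          rw [hz3, romik_low (by norm_num)]
          rw [show (k:ℝ)+1-t = t-k by linarith]
          norm_num [div_self (ne_of_gt htk)]
        · -- second branch, z > 1/3
          have hz3 : ¬ z ≤ 1/3 := by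
            rw [hZ, not_le, lt_div_iff₀ htk1]; linarith
          rw [if_neg (by rw [hthr]; linarith), e1, e2,
            div_div_same htne (ne_of_gt htk)]
          rw [romik_mid hz3 hzmem.2, hZ, one_div_div]
          rw [div_sub' (ne_of_gt htk)]
          congr 1
          ring
end

section
/- Let f : [0,1] → [0,1] be defined by f(x) = (1 − x)/(1 + x). Then f is an involution of [0,1] (f(f(x)) = x), and f conjugates the odd-odd continued fraction map to the even integer continued fraction map: f(T(x)) = T_EICF(f(x)) for every x ∈ [0,1]. -/
/-- The even integer continued fraction map on `[0,1]`: `0 ↦ 0`, and for `k ≥ 1`,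
`x ↦ 1/x - 2k` if `x ∈ [1/(2k+1), 1/(2k)]`, `x ↦ 2k - 1/x` if `x ∈ (1/(2k), 1/(2k-1)]`;
here `k = ⌊(1/x + 1)/2⌋`. -/
noncomputable def eicfT (x : ℝ) : ℝ :=
  if x = 0 then 0
  else if 2 * (⌊(1 / x + 1) / 2⌋ : ℝ) ≤ 1 / x then 1 / x - 2 * (⌊(1 / x + 1) / 2⌋ : ℝ)
  else 2 * (⌊(1 / x + 1) / 2⌋ : ℝ) - 1 / x

/-- The map `f(x) = (1-x)/(1+x)`. -/
noncomputable def invol (x : ℝ) : ℝ := (1 - x) / (1 + x)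

/-- `f(x) = (1-x)/(1+x)` is an involution of `[0,1]` conjugating the odd-odd continued
fraction map with the even integer continued fraction map. -/
theorem invol_conjugates_oocfT_eicfT :
    (∀ x ∈ Set.Icc (0 : ℝ) 1, invol (invol x) = x) ∧
      (∀ x ∈ Set.Icc (0 : ℝ) 1, invol (oocfT x) = eicfT (invol x)) := by
  constructor
  · rintro x ⟨h0, h1⟩
    have hpx : (0:ℝ) < 1 + x := by linarith
    have h2 : 1 + (1 - x) / (1 + x) = 2 / (1 + x) := by field_simp; ring
    unfold invol
    rw [h2, div_eq_iff (by positivity)]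
    field_simp
    ring
  · rintro x ⟨h0, h1⟩
    by_cases hx1 : x = 1
    · subst hx1
      simp [oocfT, invol, eicfT]
    · have hlt : x < 1 := lt_of_le_of_ne h1 hx1
      have h1x : (0:ℝ) < 1 - x := by linarith
      have hpx : (0:ℝ) < 1 + x := by linarith
      have hk1 : (1:ℝ) ≤ 1 / (1 - x) := by rw [le_div_iff₀ h1x]; linarith
      have hkge : (1:ℝ) ≤ (⌊1 / (1 - x)⌋ : ℝ) := by
        have : (1:ℤ) ≤ ⌊1 / (1 - x)⌋ := by
          rw [Int.le_floor]; exact_mod_cast hk1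
        exact_mod_cast this
      set K : ℝ := (⌊1 / (1 - x)⌋ : ℝ) with hK
      have hkle : K ≤ 1 / (1 - x) := Int.floor_le _
      have hklt : 1 / (1 - x) < K + 1 := Int.lt_floor_add_one _
      have hB : (0:ℝ) < K - (K + 1) * x := by
        rw [div_lt_iff₀ h1x] at hklt
        nlinarith
      have hyne : invol x ≠ 0 := by
        unfold invol
        exact ne_of_gt (div_pos h1x hpx)
      have hinv : 1 / invol x = (1 + x) / (1 - x) := by
        unfold invol; rw [one_div_div]
      have hfloor : (⌊(1 / invol x + 1) / 2⌋ : ℝ) = K := by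
        rw [hinv]
        have heq : ((1 + x) / (1 - x) + 1) / 2 = 1 / (1 - x) := by
          field_simp; ring
        rw [heq]
      rw [oocfT, eicfT, if_neg hx1, if_neg hyne]
      rw [← hK]
      by_cases hbr : x < (2 * K - 1) / (2 * K + 1)
      · rw [if_pos hbr]
        have hbr' : x * (2 * K + 1) < 2 * K - 1 := by
          rw [lt_div_iff₀ (by linarith)] at hbr; linarith
        have hcond : ¬ (2 * (⌊(1 / invol x + 1) / 2⌋ : ℝ) ≤ 1 / invol x) := by
          rw [hfloor, hinv, not_le, div_lt_iff₀ h1x]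
          nlinarith
        rw [if_neg hcond, hfloor, hinv]
        unfold invol
        have h2 : 1 + (K * x - (K - 1)) / (K - (K + 1) * x) = (1 - x) / (K - (K + 1) * x) := by
          rw [eq_div_iff hB.ne', add_mul, div_mul_cancel₀ _ hB.ne']; ring
        rw [h2]
        rw [one_sub_div hB.ne', div_div_div_cancel_right₀ hB.ne']
        field_simp
        ring
      · rw [if_neg hbr]
        push_neg at hbr
        have hbr' : 2 * K - 1 ≤ x * (2 * K + 1) := by
          rw [div_le_iff₀ (by linarith)] at hbr; linarith
        have hA : (0:ℝ) < K * x - (K - 1) := by nlinarith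
        have hcond : 2 * (⌊(1 / invol x + 1) / 2⌋ : ℝ) ≤ 1 / invol x := by
          rw [hfloor, hinv, le_div_iff₀ h1x]
          linarith
        rw [if_pos hcond, hfloor, hinv]
        unfold invol
        have h2 : 1 + (K - (K + 1) * x) / (K * x - (K - 1)) = (1 - x) / (K * x - (K - 1)) := by
          rw [eq_div_iff hA.ne', add_mul, div_mul_cancel₀ _ hA.ne']; ring
        rw [h2]
        field_simp
        ring
end

section
/- For every irrational x ∈ (0,1) and every integer n ≥ 0: p_n and q_n are both odd and gcd(p_n, q_n) = 1; moreover, for every n ≥ 1, p'_n + q'_n is odd and p''_n + q''_n is odd (i.e., p'_n/q'_n and p''_n/q''_n have numerator and denominator of opposite parity). -/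
lemma oocfE_pm (y : ℝ) : oocfE y = -1 ∨ oocfE y = 1 := by
  unfold oocfE; split <;> simp

lemma oocf_key (x : ℝ) (n : ℕ) :
    Odd (oocfP x n) ∧ Odd (oocfQ x n) ∧
      (oocfP x n * oocfQ' x n - oocfP' x n * oocfQ x n = 1 ∨
        oocfP x n * oocfQ' x n - oocfP' x n * oocfQ x n = -1) ∧
      Odd (oocfP' x n + oocfQ' x n) := by
  induction n with
  | zero =>
    refine ⟨⟨0, rfl⟩, ⟨0, rfl⟩, Or.inr ?_, ⟨0, rfl⟩⟩ <;>
      simp [oocfP, oocfQ, oocfP', oocfQ', oocfConv]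
  | succ n ih =>
    obtain ⟨hp, hq, hD, hs⟩ := ih
    have hE : Odd (oocfE (oocfT^[n] x)) := by
      rcases oocfE_pm (oocfT^[n] x) with h | h <;> rw [h] <;> decide
    have hP1 : oocfP x (n+1)
        = 2 * (oocfA (oocfT^[n] x) * oocfP x n - oocfP' x n)
          + oocfE (oocfT^[n] x) * oocfP x n := by
      simp [oocfP, oocfP', oocfQ, oocfQ', oocfConv]
    have hQ1 : oocfQ x (n+1)
        = 2 * (oocfA (oocfT^[n] x) * oocfQ x n - oocfQ' x n)
          + oocfE (oocfT^[n] x) * oocfQ x n := by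
      simp [oocfP, oocfP', oocfQ, oocfQ', oocfConv]
    have hP'1 : oocfP' x (n+1) = oocfA (oocfT^[n] x) * oocfP x n - oocfP' x n := by
      simp [oocfP, oocfP', oocfQ, oocfQ', oocfConv]
    have hQ'1 : oocfQ' x (n+1) = oocfA (oocfT^[n] x) * oocfQ x n - oocfQ' x n := by
      simp [oocfP, oocfP', oocfQ, oocfQ', oocfConv]
    refine ⟨?_, ?_, ?_, ?_⟩
    · rw [hP1]; exact (even_two_mul _).add_odd (hE.mul hp)
    · rw [hQ1]; exact (even_two_mul _).add_odd (hE.mul hq)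
    · rw [hP1, hQ1, hP'1, hQ'1]
      rcases oocfE_pm (oocfT^[n] x) with h | h <;> rw [h] <;> rcases hD with h' | h'
      · exact Or.inl (by linear_combination h')
      · exact Or.inr (by linear_combination h')
      · exact Or.inr (by linear_combination -h')
      · exact Or.inl (by linear_combination -h')
    · rw [hP'1, hQ'1]
      obtain ⟨k, hk⟩ := (hp.add_odd hq).mul_left (oocfA (oocfT^[n] x))
      obtain ⟨i, hi⟩ := hs
      exact ⟨k - i - 1, by linear_combination hk - hi⟩

/-- For irrational `x ∈ (0,1)`: all principal convergents `p_n/q_n` are odd/odd and in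
lowest terms, while the sub-convergents `p'_n/q'_n` and pseudo-convergents `p''_n/q''_n`
(`n ≥ 1`) have numerator and denominator of opposite parity. -/
theorem oocf_convergents_parity
    (x : ℝ) (hx : x ∈ Set.Ioo (0 : ℝ) 1) (hirr : Irrational x) :
    (∀ n : ℕ, Odd (oocfP x n) ∧ Odd (oocfQ x n) ∧ IsCoprime (oocfP x n) (oocfQ x n)) ∧
      (∀ n : ℕ, 1 ≤ n →
        Odd (oocfP' x n + oocfQ' x n) ∧ Odd (oocfP'' x n + oocfQ'' x n)) := by
  constructor
  · intro n
    obtain ⟨hp, hq, hD, _⟩ := oocf_key x n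
    refine ⟨hp, hq, ?_⟩
    rcases hD with h | h
    · exact ⟨oocfQ' x n, -(oocfP' x n), by linear_combination h⟩
    · exact ⟨-(oocfQ' x n), oocfP' x n, by linear_combination -h⟩
  · rintro (_ | m) hm
    · omega
    obtain ⟨hp, hq, _, _⟩ := oocf_key x m
    obtain ⟨_, _, _, hs⟩ := oocf_key x (m + 1)
    refine ⟨hs, ?_⟩
    obtain ⟨k, hk⟩ := (hp.add_odd hq).mul_left (oocfE (oocfT^[m] x))
    obtain ⟨i, hi⟩ := hs
    show Odd ((oocfP' x (m+1) + oocfE (oocfT^[m] x) * oocfP x m)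
      + (oocfQ' x (m+1) + oocfE (oocfT^[m] x) * oocfQ x m))
    exact ⟨i + k, by linear_combination hi + hk⟩
end

section
/- For every irrational x ∈ (0,1) and every integer n ≥ 1, the sub-convergents and pseudo-convergents of the odd-odd continued fraction of x satisfy p'_n·q''_n − p''_n·q'_n = (−1)^n · ε_1·ε_2···ε_n. In particular |p'_n·q''_n − p''_n·q'_n| = 1 for all n ≥ 1. -/
lemma oocfE_abs (y : ℝ) : |oocfE y| = 1 := by
  unfold oocfE; split <;> simp

lemma oocf_det (x : ℝ) (n : ℕ) :
    oocfP' x n * oocfQ x n - oocfP x n * oocfQ' x n =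
      (-1) ^ n * ∏ i ∈ Finset.range n, oocfE (oocfT^[i] x) := by
  induction n with
  | zero => simp [oocfP', oocfQ, oocfP, oocfQ', oocfConv]
  | succ m ih =>
    rw [Finset.prod_range_succ]
    simp only [oocfP', oocfQ, oocfP, oocfQ', oocfConv] at ih ⊢
    push_cast
    ring_nf
    ring_nf at ih
    linear_combination (-(oocfE (oocfT^[m] x))) * ih

/-- For every `n ≥ 1`, `p'_n q''_n - p''_n q'_n = (-1)^n · ε_1 ⋯ ε_n`; in particular the
absolute value of the left-hand side is `1`. -/
theorem oocf_sub_pseudo_convergents_det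
    (x : ℝ) (hx : x ∈ Set.Ioo (0 : ℝ) 1) (hirr : Irrational x)
    (n : ℕ) (hn : 1 ≤ n) :
    oocfP' x n * oocfQ'' x n - oocfP'' x n * oocfQ' x n =
        (-1) ^ n * ∏ i ∈ Finset.range n, oocfE (oocfT^[i] x) ∧
      |oocfP' x n * oocfQ'' x n - oocfP'' x n * oocfQ' x n| = 1 := by
  obtain ⟨m, rfl⟩ : ∃ m, n = m + 1 := ⟨n - 1, (Nat.succ_pred_eq_of_pos hn).symm⟩
  have key : oocfP' x (m + 1) * oocfQ'' x (m + 1) - oocfP'' x (m + 1) * oocfQ' x (m + 1) =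
      oocfP' x (m + 1) * oocfQ x (m + 1) - oocfP x (m + 1) * oocfQ' x (m + 1) := by
    simp only [oocfP'', oocfQ'', oocfP', oocfQ', oocfP, oocfQ, oocfConv]
    ring
  rw [key, oocf_det]
  refine ⟨rfl, ?_⟩
  rw [abs_mul, abs_pow, abs_neg, abs_one, one_pow, one_mul, Finset.abs_prod]
  simp [oocfE_abs]
end
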